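/- Let K ≥ 1 and a₀ > 0, and let f : ℝ → ℝ be K-Lipschitz with |f(y) − f(x)| ≥ K whenever y − x ≥ a₀. Then there exists a map g : ℝ → ℝ with |f(x) − g(x)| ≤ 4Ka₀ for all x ∈ ℝ such that g is K₀-bi-Lipschitz, i.e. K₀⁻¹|x − y| ≤ |g(x) − g(y)| ≤ K₀|x − y| for all x, y, where K₀ = max(2K, 2a₀/K); one may take g piecewise affine, agreeing with f on a net {x_i} with a₀ ≤ x_{i+1} − x_i ≤ 2a₀. -/
import Mathlib

lemma monotone_of_monotoneOn_cells (a : ℝ) (ha : 0 < a) (h : ℝ → ℝ)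
    (H : ∀ n : ℤ, MonotoneOn h (Set.Icc ((n : ℝ) * a) (((n : ℝ) + 1) * a))) :
    Monotone h := by
  have step : ∀ s t : ℝ, s ≤ t → t - s ≤ a → h s ≤ h t := by
    intro s t hst hta
    set n : ℤ := ⌊s / a⌋ with hn
    have hs1 : (n : ℝ) * a ≤ s := by
      rw [← le_div_iff₀ ha]; exact Int.floor_le _
    have hs2 : s < ((n : ℝ) + 1) * a := by
      rw [← div_lt_iff₀ ha]; exact Int.lt_floor_add_one _
    set m : ℝ := min t (((n : ℝ) + 1) * a) with hm
    have hsm : s ≤ m := le_min hst hs2.le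
    have h1 : h s ≤ h m :=
      H n ⟨hs1, hs2.le⟩ ⟨le_trans hs1 hsm, min_le_right _ _⟩ hsm
    rcases le_total t (((n : ℝ) + 1) * a) with hc | hc
    · rwa [hm, min_eq_left hc] at h1
    · have hmm : m = ((n : ℝ) + 1) * a := min_eq_right hc
      have h2 : h m ≤ h t := by
        have := H (n + 1) (a := m) (b := t) ?_ ?_ (hmm ▸ hc)
        · exact this
        · constructor
          · push_cast; rw [hmm]
          · push_cast; rw [hmm]; nlinarith
        · constructor
          · push_cast; exact hc
          · push_cast; nlinarith
      exact h1.trans h2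
  have main : ∀ k : ℕ, ∀ s t : ℝ, s ≤ t → t - s ≤ k * a → h s ≤ h t := by
    intro k
    induction k with
    | zero => intro s t hst h0; simp at h0; have : s = t := le_antisymm hst (by linarith); rw [this]
    | succ k ih =>
      intro s t hst hk
      rcases le_total (t - s) a with hc | hc
      · exact step s t hst hc
      · have h1 : h s ≤ h (t - a) := ih s (t - a) (by linarith) (by push_cast at hk ⊢; linarith)
        have h2 : h (t - a) ≤ h t := step (t - a) t (by linarith) (by linarith)
        exact h1.trans h2
  intro s t hst
  have := main ⌈(t - s) / a⌉₊ s t hst ?_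
  · exact this
  · have h1 : (t - s) / a ≤ (⌈(t - s) / a⌉₊ : ℝ) := Nat.le_ceil _
    calc t - s = (t - s) / a * a := by field_simp
    _ ≤ (⌈(t - s) / a⌉₊ : ℝ) * a := by nlinarith

lemma pos_case (K a₀ : ℝ) (hK : 1 ≤ K) (ha₀ : 0 < a₀) (f : ℝ → ℝ)
    (hlip : ∀ x y : ℝ, |f y - f x| ≤ K * |y - x|)
    (hpos : ∀ x : ℝ, K ≤ f (x + a₀) - f x) :
    ∃ g : ℝ → ℝ,
      (∀ x : ℝ, |f x - g x| ≤ 4 * K * a₀) ∧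
      (∀ x y : ℝ,
        (max (2 * K) (2 * a₀ / K))⁻¹ * |x - y| ≤ |g x - g y| ∧
        |g x - g y| ≤ max (2 * K) (2 * a₀ / K) * |x - y|) ∧
      ∃ x : ℤ → ℝ,
        (∀ i : ℤ, a₀ ≤ x (i + 1) - x i ∧ x (i + 1) - x i ≤ 2 * a₀) ∧
        (∀ i : ℤ, g (x i) = f (x i)) ∧
        (∀ i : ℤ, ∀ t ∈ Set.Icc (x i) (x (i + 1)), ∀ s ∈ Set.Icc (x i) (x (i + 1)),
          x i < x (i + 1) →
          g t - g s = ((f (x (i + 1)) - f (x i)) / (x (i + 1) - x i)) * (t - s)) := by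
  have hK0 : 0 < K := by linarith
  set net : ℤ → ℝ := fun i => (i : ℝ) * a₀ with hnet
  have hnet1 : ∀ i : ℤ, net (i + 1) = net i + a₀ := by
    intro i; simp only [hnet]; push_cast; ring
  set slope : ℤ → ℝ := fun i => (f (net (i + 1)) - f (net i)) / a₀ with hslope
  have hslope_lb : ∀ i : ℤ, K / a₀ ≤ slope i := by
    intro i
    have h1 := hpos (net i)
    rw [← hnet1 i] at h1
    exact (div_le_div_iff_of_pos_right ha₀).mpr h1
  have hslope_ub : ∀ i : ℤ, slope i ≤ K := by
    intro i
    have h1 := hlip (net i) (net (i + 1))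
    rw [hnet1 i, show net i + a₀ - net i = a₀ by ring, abs_of_pos ha₀] at h1
    rw [hslope, div_le_iff₀ ha₀]
    calc f (net (i + 1)) - f (net i) ≤ |f (net (i + 1)) - f (net i)| := le_abs_self _
    _ ≤ K * a₀ := by rw [hnet1 i]; exact h1
  set g : ℝ → ℝ := fun t => f (net ⌊t / a₀⌋) + slope ⌊t / a₀⌋ * (t - net ⌊t / a₀⌋) with hg
  -- cell formula
  have gcell : ∀ i : ℤ, ∀ t : ℝ, net i ≤ t → t ≤ net (i + 1) →
      g t = f (net i) + slope i * (t - net i) := by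
    intro i t h1 h2
    rcases lt_or_eq_of_le h2 with h2 | h2
    · have hfl : ⌊t / a₀⌋ = i := by
        rw [Int.floor_eq_iff]
        constructor
        · rw [le_div_iff₀ ha₀]; exact h1
        · rw [div_lt_iff₀ ha₀]
          calc t < net (i + 1) := h2
          _ = ((i : ℝ) + 1) * a₀ := by simp only [hnet]; push_cast; ring
      rw [hg]; simp only [hfl]
    · subst h2
      have hfl : ⌊net (i + 1) / a₀⌋ = i + 1 := by
        rw [show net (i + 1) / a₀ = ((i + 1 : ℤ) : ℝ) by
          simp only [hnet]; field_simp]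
        exact Int.floor_intCast _
      rw [hg]; simp only [hfl, sub_self, mul_zero, add_zero]
      rw [show net (i + 1) - net i = a₀ by rw [hnet1 i]; ring, hslope]
      simp only
      rw [div_mul_cancel₀ _ (ne_of_gt ha₀)]
      ring
  -- global bounds
  have gbound : ∀ s t : ℝ, s ≤ t →
      K / a₀ * (t - s) ≤ g t - g s ∧ g t - g s ≤ K * (t - s) := by
    have m1 : Monotone (fun t => g t - K / a₀ * t) := by
      apply monotone_of_monotoneOn_cells a₀ ha₀
      intro n u hu v hv huv
      have hu' := gcell n u (by simpa [hnet] using hu.1)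
        (by rw [hnet1]; simp only [hnet]; have := hu.2; linarith [hu.2])
      have hv' := gcell n v (by simpa [hnet] using hv.1)
        (by rw [hnet1]; simp only [hnet]; linarith [hv.2])
      simp only
      rw [hu', hv']
      have := hslope_lb n
      nlinarith
    have m2 : Monotone (fun t => K * t - g t) := by
      apply monotone_of_monotoneOn_cells a₀ ha₀
      intro n u hu v hv huv
      have hu' := gcell n u (by simpa [hnet] using hu.1)
        (by rw [hnet1]; simp only [hnet]; linarith [hu.2])
      have hv' := gcell n v (by simpa [hnet] using hv.1)
        (by rw [hnet1]; simp only [hnet]; linarith [hv.2])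
      simp only
      rw [hu', hv']
      have := hslope_ub n
      nlinarith
    intro s t hst
    have h1 := m1 hst
    have h2 := m2 hst
    simp only at h1 h2
    constructor <;> nlinarith
  refine ⟨g, ?_, ?_, net, ?_, ?_, ?_⟩
  · -- distance bound
    intro t
    set i : ℤ := ⌊t / a₀⌋ with hi
    have h1 : net i ≤ t := by
      rw [hnet]; simp only; rw [← le_div_iff₀ ha₀]; exact Int.floor_le _
    have h2 : t ≤ net i + a₀ := by
      rw [hnet]; simp only
      have := Int.lt_floor_add_one (t / a₀)
      rw [div_lt_iff₀ ha₀] at this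
      linarith [this]
    have hgf : g t = f (net i) + slope i * (t - net i) :=
      gcell i t h1 (by rw [hnet1]; exact h2)
    have hl := hlip (net i) t
    have habs : |t - net i| ≤ a₀ := by rw [abs_of_nonneg (by linarith)]; linarith
    have hft : |f t - f (net i)| ≤ K * a₀ := by
      calc |f t - f (net i)| ≤ K * |t - net i| := hl
      _ ≤ K * a₀ := by nlinarith
    have hsl : |slope i * (t - net i)| ≤ K * a₀ := by
      rw [abs_mul]
      have hub := hslope_ub i
      have hlb := hslope_lb i
      have hpos' : 0 < slope i := lt_of_lt_of_le (by positivity) hlb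
      rw [abs_of_pos hpos']
      have h3 : 0 ≤ |t - net i| := abs_nonneg _
      nlinarith
    rw [hgf]
    have : |f t - (f (net i) + slope i * (t - net i))|
        ≤ |f t - f (net i)| + |slope i * (t - net i)| := by
      calc |f t - (f (net i) + slope i * (t - net i))|
          = |(f t - f (net i)) + (-(slope i * (t - net i)))| := by ring_nf
      _ ≤ |f t - f (net i)| + |(-(slope i * (t - net i)))| := abs_add_le _ _
      _ = |f t - f (net i)| + |slope i * (t - net i)| := by rw [abs_neg]
    nlinarith
  · -- bi-Lipschitz
    have key : ∀ x y : ℝ, x ≤ y →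
        (max (2 * K) (2 * a₀ / K))⁻¹ * |x - y| ≤ |g x - g y| ∧
        |g x - g y| ≤ max (2 * K) (2 * a₀ / K) * |x - y| := by
      intro x y hxy
      obtain ⟨hb1, hb2⟩ := gbound x y hxy
      have hg0 : 0 ≤ g y - g x :=
        le_trans (mul_nonneg (by positivity) (by linarith)) hb1
      have habs1 : |g x - g y| = g y - g x := by rw [abs_sub_comm, abs_of_nonneg hg0]
      have habs2 : |x - y| = y - x := by rw [abs_sub_comm, abs_of_nonneg (by linarith)]
      have hmax1 : 2 * K ≤ max (2 * K) (2 * a₀ / K) := le_max_left _ _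
      have hmax2 : 2 * a₀ / K ≤ max (2 * K) (2 * a₀ / K) := le_max_right _ _
      have hmaxpos : 0 < max (2 * K) (2 * a₀ / K) := lt_of_lt_of_le (by linarith) hmax1
      constructor
      · rw [habs1, habs2]
        have hinv : (max (2 * K) (2 * a₀ / K))⁻¹ ≤ K / a₀ := by
          rw [inv_le_comm₀ (by exact hmaxpos) (by positivity)]
          rw [inv_div]
          calc a₀ / K ≤ 2 * a₀ / K := by gcongr; linarith
          _ ≤ _ := hmax2
        calc (max (2 * K) (2 * a₀ / K))⁻¹ * (y - x)
            ≤ K / a₀ * (y - x) := mul_le_mul_of_nonneg_right hinv (by linarith)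
        _ ≤ g y - g x := hb1
      · rw [habs1, habs2]
        calc g y - g x ≤ K * (y - x) := hb2
        _ ≤ 2 * K * (y - x) := by nlinarith [mul_nonneg hK0.le (sub_nonneg.mpr hxy)]
        _ ≤ max (2 * K) (2 * a₀ / K) * (y - x) :=
            mul_le_mul_of_nonneg_right hmax1 (by linarith)
    intro x y
    rcases le_total x y with h | h
    · exact key x y h
    · obtain ⟨k1, k2⟩ := key y x h
      rw [abs_sub_comm x y, abs_sub_comm (g x) (g y)]
      exact ⟨k1, k2⟩
  · intro i
    rw [hnet1 i]
    constructor <;> linarith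
  · intro i
    rw [gcell i (net i) le_rfl (by rw [hnet1]; linarith), sub_self, mul_zero, add_zero]
  · intro i t ht s hs _
    rw [gcell i t ht.1 ht.2, gcell i s hs.1 hs.2,
      show net (i + 1) - net i = a₀ by rw [hnet1]; ring]
    rw [hslope]; ring
/-- **Bi-Lipschitz reparametrization of a displacing Lipschitz map of `ℝ`.**
Let `K ≥ 1` and `a₀ > 0`, and let `f : ℝ → ℝ` be `K`-Lipschitz with `|f y − f x| ≥ K`
whenever `y − x ≥ a₀`.  Then there is a map `g : ℝ → ℝ` with `|f x − g x| ≤ 4Ka₀` for all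
`x` such that `g` is `K₀`-bi-Lipschitz for `K₀ = max (2K) (2a₀/K)`; one may take `g`
piecewise affine, agreeing with `f` on a net `{x i}` with `a₀ ≤ x (i+1) − x i ≤ 2a₀`.

This is the one-dimensional content of the bi-Lipschitz reparametrization lemma for
tube-boundary leaf maps in the proof of the bi-Lipschitz model theorem. -/
theorem exists_biLipschitz_approx
    (K a₀ : ℝ) (hK : 1 ≤ K) (ha₀ : 0 < a₀) (f : ℝ → ℝ)
    (hlip : ∀ x y : ℝ, |f y - f x| ≤ K * |y - x|)
    (hdisp : ∀ x y : ℝ, a₀ ≤ y - x → K ≤ |f y - f x|) :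
    ∃ g : ℝ → ℝ,
      (∀ x : ℝ, |f x - g x| ≤ 4 * K * a₀) ∧
      (∀ x y : ℝ,
        (max (2 * K) (2 * a₀ / K))⁻¹ * |x - y| ≤ |g x - g y| ∧
        |g x - g y| ≤ max (2 * K) (2 * a₀ / K) * |x - y|) ∧
      -- one may take `g` piecewise affine, agreeing with `f` on a net at scale `a₀`:
      ∃ x : ℤ → ℝ,
        (∀ i : ℤ, a₀ ≤ x (i + 1) - x i ∧ x (i + 1) - x i ≤ 2 * a₀) ∧
        (∀ i : ℤ, g (x i) = f (x i)) ∧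
        (∀ i : ℤ, ∀ t ∈ Set.Icc (x i) (x (i + 1)), ∀ s ∈ Set.Icc (x i) (x (i + 1)),
          x i < x (i + 1) →
          g t - g s = ((f (x (i + 1)) - f (x i)) / (x (i + 1) - x i)) * (t - s)) := by
  have hK0 : 0 < K := by linarith
  -- continuity of f
  have hcont : Continuous f := by
    have : LipschitzWith K.toNNReal f := by
      apply LipschitzWith.of_dist_le_mul
      intro x y
      rw [Real.dist_eq, Real.dist_eq, Real.coe_toNNReal _ hK0.le]
      exact hlip y x
    exact this.continuous
  set h : ℝ → ℝ := fun x => f (x + a₀) - f x with hh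
  have hhcont : Continuous h := (hcont.comp (continuous_id.add continuous_const)).sub hcont
  have hhK : ∀ x : ℝ, K ≤ |h x| := by
    intro x
    exact hdisp x (x + a₀) (by linarith)
  have hhne : ∀ x : ℝ, h x ≠ 0 := by
    intro x hx
    have := hhK x
    rw [hx, abs_zero] at this
    linarith
  have dichotomy : (∀ x : ℝ, K ≤ h x) ∨ (∀ x : ℝ, K ≤ -h x) := by
    by_cases hc : ∀ x : ℝ, 0 < h x
    · left
      intro x
      have := hhK x
      rwa [abs_of_pos (hc x)] at this
    · right
      push_neg at hc
      obtain ⟨x₀, hx₀⟩ := hc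
      have hx₀' : h x₀ < 0 := lt_of_le_of_ne hx₀ (hhne x₀)
      intro x
      have hxneg : h x < 0 := by
        by_contra hxp
        push_neg at hxp
        have hxp' : 0 < h x := lt_of_le_of_ne hxp (Ne.symm (hhne x))
        have : (0 : ℝ) ∈ Set.range h := by
          apply intermediate_value_univ x₀ x hhcont
          exact ⟨hx₀'.le, hxp'.le⟩
        obtain ⟨c, hc⟩ := this
        exact hhne c hc
      have := hhK x
      rwa [abs_of_neg hxneg] at this
  rcases dichotomy with hpos | hneg
  · exact pos_case K a₀ hK ha₀ f hlip hpos
  · obtain ⟨g', hd', hbl', net, hnet, hagree', haff'⟩ :=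
      pos_case K a₀ hK ha₀ (fun t => -f t)
        (by intro x y; rw [show -f y - -f x = -(f y - f x) by ring, abs_neg]; exact hlip x y)
        (by intro x; have := hneg x; simp only [hh] at this; show K ≤ -f (x + a₀) - -f x; linarith)
    refine ⟨fun t => -g' t, ?_, ?_, net, hnet, ?_, ?_⟩
    · intro t
      have := hd' t
      rw [show -f t - g' t = -(f t - -g' t) by ring, abs_neg] at this
      exact this
    · intro x y
      have := hbl' x y
      rwa [show -g' x - -g' y = -(g' x - g' y) by ring, abs_neg] at *
    · intro i
      have := hagree' i
      simp only at this ⊢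
      rw [this]; ring
    · intro i t ht s hs hlt
      have := haff' i t ht s hs hlt
      simp only at this ⊢
      have h2 : g' t - g' s = (-f (net (i + 1)) - -f (net i)) / (net (i + 1) - net i) * (t - s) := this
      have h3 : -g' t - -g' s = -(g' t - g' s) := by ring
      rw [h3, h2]
      ring
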